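/- Let g : [0,1] → ℝ be continuously differentiable with g(0) = g(1) = 0. Then (max_{x∈[0,1]} |g(x)|)² ≤ (∫₀¹ g(x)² dx)^{1/2} · (∫₀¹ g'(x)² dx)^{1/2}, i.e. ‖g‖_{L∞} ≤ ‖g‖_{L²}^{1/2} ‖g'‖_{L²}^{1/2}. -/

import Mathlib

open Set Real MeasureTheory intervalIntegral

/-- Agmon-type interpolation inequality: for a `C¹` function `g` on `[0,1]` with
`g(0) = g(1) = 0` one has `‖g‖_{L∞}² ≤ ‖g‖_{L²} · ‖g'‖_{L²}`. -/
theorem sup_sq_le_L2_mul_L2_deriv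
    (g g' : ℝ → ℝ)
    (hg : ∀ x ∈ Icc (0:ℝ) 1, HasDerivAt g (g' x) x)
    (hg' : ContinuousOn g' (Icc 0 1))
    (h0 : g 0 = 0) (h1 : g 1 = 0) :
    ∀ x ∈ Icc (0:ℝ) 1,
      |g x| ^ 2 ≤ Real.sqrt (∫ x in (0:ℝ)..1, (g x) ^ 2) *
        Real.sqrt (∫ x in (0:ℝ)..1, (g' x) ^ 2) := by
  have hgc : ContinuousOn g (Icc 0 1) := fun t ht =>
    (hg t ht).continuousAt.continuousWithinAt
  -- the product `g * g'` is continuous on `[0,1]`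
  have hprod : ContinuousOn (fun t => 2 * g t * g' t) (Icc 0 1) := by
    fun_prop
  have habs : ContinuousOn (fun t => 2 * (|g t| * |g' t|)) (Icc 0 1) := by
    fun_prop
  intro x hx
  obtain ⟨hx0, hx1⟩ := hx
  have hsub1 : Icc (0:ℝ) x ⊆ Icc 0 1 := Icc_subset_Icc le_rfl hx1
  have hsub2 : Icc x (1:ℝ) ⊆ Icc 0 1 := Icc_subset_Icc hx0 le_rfl
  -- FTC on [0,x] and [x,1]
  have key1 : ∫ t in (0:ℝ)..x, 2 * g t * g' t = g x ^ 2 - g 0 ^ 2 := by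
    apply intervalIntegral.integral_eq_sub_of_hasDerivAt (f := fun t => g t ^ 2)
    · intro t ht
      rw [uIcc_of_le hx0] at ht
      simpa using (hg t (hsub1 ht)).fun_pow 2
    · exact (hprod.mono (by rw [uIcc_of_le hx0]; exact hsub1)).intervalIntegrable
  have key2 : ∫ t in x..(1:ℝ), 2 * g t * g' t = g 1 ^ 2 - g x ^ 2 := by
    apply intervalIntegral.integral_eq_sub_of_hasDerivAt (f := fun t => g t ^ 2)
    · intro t ht
      rw [uIcc_of_le hx1] at ht
      simpa using (hg t (hsub2 ht)).fun_pow 2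
    · exact (hprod.mono (by rw [uIcc_of_le hx1]; exact hsub2)).intervalIntegrable
  rw [h0] at key1; rw [h1] at key2; norm_num at key1 key2
  -- bound `2 g(x)²` by `∫₀¹ 2|g||g'|`
  have hb1 : ∫ t in (0:ℝ)..x, 2 * g t * g' t ≤
      ∫ t in (0:ℝ)..x, 2 * (|g t| * |g' t|) := by
    apply intervalIntegral.integral_mono_on hx0
    · exact (hprod.mono hsub1).intervalIntegrable_of_Icc hx0
    · exact (habs.mono hsub1).intervalIntegrable_of_Icc hx0
    · intro t ht
      calc 2 * g t * g' t ≤ |2 * g t * g' t| := le_abs_self _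
        _ = 2 * (|g t| * |g' t|) := by
            rw [abs_mul, abs_mul]; simp [abs_of_nonneg, mul_assoc]
  have hb2 : g x ^ 2 ≤ ∫ t in x..(1:ℝ), 2 * (|g t| * |g' t|) := by
    have hmono : ∫ t in x..(1:ℝ), 2 * g t * g' t ≥
        ∫ t in x..(1:ℝ), -(2 * (|g t| * |g' t|)) := by
      apply intervalIntegral.integral_mono_on hx1
      · exact ((habs.mono hsub2).neg).intervalIntegrable_of_Icc hx1
      · exact (hprod.mono hsub2).intervalIntegrable_of_Icc hx1
      · intro t ht
        calc -(2 * (|g t| * |g' t|)) = -|2 * g t * g' t| := by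
              rw [abs_mul, abs_mul]; simp [abs_of_nonneg, mul_assoc]
          _ ≤ 2 * g t * g' t := neg_abs_le _
    rw [intervalIntegral.integral_neg] at hmono
    linarith [key2, hmono]
  have hsplit : (∫ t in (0:ℝ)..x, 2 * (|g t| * |g' t|)) +
      (∫ t in x..(1:ℝ), 2 * (|g t| * |g' t|)) =
      ∫ t in (0:ℝ)..1, 2 * (|g t| * |g' t|) := by
    apply intervalIntegral.integral_add_adjacent_intervals
    · exact (habs.mono hsub1).intervalIntegrable_of_Icc hx0
    · exact (habs.mono hsub2).intervalIntegrable_of_Icc hx1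
  have hmain : g x ^ 2 ≤ ∫ t in (0:ℝ)..1, |g t| * |g' t| := by
    have h2 : 2 * g x ^ 2 ≤ ∫ t in (0:ℝ)..1, 2 * (|g t| * |g' t|) := by
      rw [← hsplit]; linarith [hb1, hb2, key1]
    rw [intervalIntegral.integral_const_mul] at h2
    linarith
  -- Cauchy–Schwarz
  have hCS : ∫ t in (0:ℝ)..1, |g t| * |g' t| ≤
      Real.sqrt (∫ x in (0:ℝ)..1, (g x) ^ 2) *
        Real.sqrt (∫ x in (0:ℝ)..1, (g' x) ^ 2) := by
    rw [intervalIntegral.integral_of_le (by norm_num : (0:ℝ) ≤ 1)]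
    have hμ : IsFiniteMeasure (volume.restrict (Ioc (0:ℝ) 1)) := by
      constructor
      simp [Real.volume_Ioc]
    have hmg : AEStronglyMeasurable (fun t => |g t|) (volume.restrict (Ioc (0:ℝ) 1)) := by
      apply ContinuousOn.aestronglyMeasurable _ measurableSet_Ioc
      exact (hgc.mono Ioc_subset_Icc_self).abs
    have hmg' : AEStronglyMeasurable (fun t => |g' t|) (volume.restrict (Ioc (0:ℝ) 1)) := by
      apply ContinuousOn.aestronglyMeasurable _ measurableSet_Ioc
      exact (hg'.mono Ioc_subset_Icc_self).abs
    obtain ⟨C, hC⟩ := (isCompact_Icc.image_of_continuousOn hgc).isBounded.subset_closedBall 0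
    obtain ⟨C', hC'⟩ := (isCompact_Icc.image_of_continuousOn hg').isBounded.subset_closedBall 0
    have hLg : MemLp (fun t => |g t|) (ENNReal.ofReal 2) (volume.restrict (Ioc (0:ℝ) 1)) := by
      apply MemLp.of_bound hmg C
      filter_upwards [ae_restrict_mem measurableSet_Ioc] with t ht
      have := hC ⟨t, Ioc_subset_Icc_self ht, rfl⟩
      simpa [Metric.mem_closedBall, Real.norm_eq_abs, Real.dist_eq] using this
    have hLg' : MemLp (fun t => |g' t|) (ENNReal.ofReal 2) (volume.restrict (Ioc (0:ℝ) 1)) := by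
      apply MemLp.of_bound hmg' C'
      filter_upwards [ae_restrict_mem measurableSet_Ioc] with t ht
      have := hC' ⟨t, Ioc_subset_Icc_self ht, rfl⟩
      simpa [Metric.mem_closedBall, Real.norm_eq_abs, Real.dist_eq] using this
    have := MeasureTheory.integral_mul_le_Lp_mul_Lq_of_nonneg
      (⟨by norm_num, by norm_num, by norm_num⟩ : Real.HolderConjugate 2 2) (f := fun t => |g t|) (g := fun t => |g' t|)
      (Filter.Eventually.of_forall fun t => abs_nonneg _)
      (Filter.Eventually.of_forall fun t => abs_nonneg _) hLg hLg'
    calc ∫ t in Ioc (0:ℝ) 1, |g t| * |g' t| ≤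
        (∫ t in Ioc (0:ℝ) 1, |g t| ^ (2:ℝ)) ^ ((1:ℝ)/2) *
          (∫ t in Ioc (0:ℝ) 1, |g' t| ^ (2:ℝ)) ^ ((1:ℝ)/2) := this
      _ = Real.sqrt (∫ x in (0:ℝ)..1, (g x) ^ 2) *
          Real.sqrt (∫ x in (0:ℝ)..1, (g' x) ^ 2) := by
          rw [intervalIntegral.integral_of_le (by norm_num : (0:ℝ) ≤ 1),
            intervalIntegral.integral_of_le (by norm_num : (0:ℝ) ≤ 1)]
          congr 1
          · rw [Real.sqrt_eq_rpow]
            congr 1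
            apply MeasureTheory.integral_congr_ae
            filter_upwards with t
            rw [show (2:ℝ) = ((2:ℕ):ℝ) by norm_num, Real.rpow_natCast, sq_abs]
          · rw [Real.sqrt_eq_rpow]
            congr 1
            apply MeasureTheory.integral_congr_ae
            filter_upwards with t
            rw [show (2:ℝ) = ((2:ℕ):ℝ) by norm_num, Real.rpow_natCast, sq_abs]
  calc |g x| ^ 2 = g x ^ 2 := sq_abs _
    _ ≤ _ := le_trans hmain hCS
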